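/- Suppose Ψ : ℝ → Matrix (Fin m) (Fin m) ℂ has entries that are each q-times differentiable at 0. Then the q-th derivative at 0 of F(x) = det(Ψ(x)) equals the sum over all tuples (q_1, ..., q_m) of nonnegative integers with q_1 + ... + q_m = q of the multinomial coefficient q!/(q_1! ⋯ q_m!) times the determinant of the matrix whose i-th row is the q_i-th derivative at 0 of the i-th row of Ψ. -/

import Mathlib

open Finset Filter Topology


lemma aux_contDiffAt_deriv {q : ℕ} {f : ℝ → ℂ} {x : ℝ} (h : ContDiffAt ℝ ((q:ℕ∞)+1) f x) :
    ContDiffAt ℝ (q:ℕ∞) (deriv f) x := by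
  have h1 : ContDiffAt ℝ (q:ℕ∞) (fderiv ℝ f) x := h.fderiv_right (by exact_mod_cast le_refl _)
  have h2 : deriv f = fun y => fderiv ℝ f y 1 := funext fun y => (fderiv_apply_one_eq_deriv).symm
  rw [h2]
  exact h1.clm_apply contDiffAt_const

lemma aux_contDiffAt_prod {ι : Type*} [DecidableEq ι] (s : Finset ι) (f : ι → ℝ → ℂ)
    {n : WithTop ℕ∞} {x : ℝ} (h : ∀ i ∈ s, ContDiffAt ℝ n (f i) x) :
    ContDiffAt ℝ n (fun y => ∏ i ∈ s, f i y) x := by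
  induction s using Finset.induction with
  | empty => simpa using contDiffAt_const
  | @insert a s h' ih =>
    simp_rw [Finset.prod_insert h']
    exact (h a (mem_insert_self a s)).mul (ih fun i hi => h i (mem_insert_of_mem hi))

lemma aux_iteratedDeriv_add {q : ℕ} {f g : ℝ → ℂ} {x : ℝ}
    (hf : ContDiffAt ℝ (q:ℕ∞) f x) (hg : ContDiffAt ℝ (q:ℕ∞) g x) :
    iteratedDeriv q (fun y => f y + g y) x = iteratedDeriv q f x + iteratedDeriv q g x := by
  obtain ⟨u, hu, hfu⟩ := hf.contDiffOn (le_refl _) (by simp)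
  obtain ⟨v, hv, hgv⟩ := hg.contDiffOn (le_refl _) (by simp)
  set t := interior (u ∩ v) with ht
  have hto : IsOpen t := isOpen_interior
  have hxt : x ∈ t := mem_interior_iff_mem_nhds.2 (inter_mem hu hv)
  have h1 : ∀ h : ℝ → ℂ, iteratedDeriv q h x = iteratedDerivWithin q h t x := fun h => by
    rw [iteratedDerivWithin, iteratedDeriv, iteratedFDerivWithin_of_isOpen q hto hxt]
  rw [h1, h1, h1]
  have := iteratedDerivWithin_add hxt hto.uniqueDiffOn
    ((hfu.mono (interior_subset.trans Set.inter_subset_left)) x hxt)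
    ((hgv.mono (interior_subset.trans Set.inter_subset_right)) x hxt)
  simpa [Pi.add_def] using this

lemma aux_iteratedDeriv_sum {ι : Type*} [DecidableEq ι] (s : Finset ι) (f : ι → ℝ → ℂ)
    {q : ℕ} {x : ℝ} (h : ∀ i ∈ s, ContDiffAt ℝ (q:ℕ∞) (f i) x) :
    iteratedDeriv q (fun y => ∑ i ∈ s, f i y) x = ∑ i ∈ s, iteratedDeriv q (f i) x := by
  induction s using Finset.induction with
  | empty =>
    simp only [Finset.sum_empty]
    simp [iteratedDeriv, iteratedFDeriv_zero_fun]
  | @insert a s h' ih =>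
    simp_rw [Finset.sum_insert h']
    rw [aux_iteratedDeriv_add (h a (mem_insert_self a s))
      (ContDiffAt.sum fun i hi => h i (mem_insert_of_mem hi)),
      ih fun i hi => h i (mem_insert_of_mem hi)]

lemma aux_iteratedDeriv_const_mul {q : ℕ} {f : ℝ → ℂ} {x : ℝ} (c : ℂ)
    (hf : ContDiffAt ℝ (q:ℕ∞) f x) :
    iteratedDeriv q (fun y => c * f y) x = c * iteratedDeriv q f x := by
  obtain ⟨u, hu, hfu⟩ := hf.contDiffOn (le_refl _) (by simp)
  set t := interior u with ht
  have hto : IsOpen t := isOpen_interior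
  have hxt : x ∈ t := mem_interior_iff_mem_nhds.2 hu
  have h1 : ∀ h : ℝ → ℂ, iteratedDeriv q h x = iteratedDerivWithin q h t x := fun h => by
    rw [iteratedDerivWithin, iteratedDeriv, iteratedFDerivWithin_of_isOpen q hto hxt]
  rw [h1, h1]
  have := iteratedDerivWithin_const_smul (R := ℂ) hxt hto.uniqueDiffOn c
    ((hfu.mono interior_subset) x hxt)
  simpa [Pi.smul_def, smul_eq_mul] using this


lemma aux_comb (m q : ℕ) (T : (Fin m → ℕ) → ℂ) :
    ∑ j : Fin m, ∑ k ∈ Finset.Nat.antidiagonalTuple m q,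
        ((q.factorial : ℂ) / ∏ i, ((k i).factorial : ℂ)) * T (k + Pi.single j 1)
    = ∑ l ∈ Finset.Nat.antidiagonalTuple m (q+1),
        (((q+1).factorial : ℂ) / ∏ i, ((l i).factorial : ℂ)) * T l := by
  have hq1 : ((q:ℂ)+1) ≠ 0 := Nat.cast_add_one_ne_zero q
  have key : ∀ j : Fin m,
      ∑ k ∈ Finset.Nat.antidiagonalTuple m q,
        ((q.factorial : ℂ) / ∏ i, ((k i).factorial : ℂ)) * T (k + Pi.single j 1)
      = ∑ l ∈ Finset.Nat.antidiagonalTuple m (q+1),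
          ((l j : ℂ)/((q:ℂ)+1)) *
            ((((q+1).factorial : ℂ) / ∏ i, ((l i).factorial : ℂ)) * T l) := by
    intro j
    rw [← Finset.sum_filter_of_ne (p := fun l => l j ≠ 0) (f := fun l =>
        ((l j : ℂ)/((q:ℂ)+1)) * ((((q+1).factorial : ℂ) / ∏ i, ((l i).factorial : ℂ)) * T l))
      (by intro l _ hne h0; simp [h0] at hne ⊢)]
    refine Finset.sum_bij (fun k _ => k + Pi.single j 1) ?_ ?_ ?_ ?_
    · intro k hk
      simp only [Finset.mem_filter, Finset.Nat.mem_antidiagonalTuple] at hk ⊢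
      refine ⟨?_, by simp⟩
      simp only [Pi.add_apply]
      rw [Finset.sum_add_distrib, hk, Finset.sum_pi_single']
      simp
    · intro a _ b _ hab
      funext i
      simpa using congrFun hab i
    · intro l hl
      simp only [Finset.mem_filter, Finset.Nat.mem_antidiagonalTuple] at hl
      refine ⟨fun i => l i - (Pi.single j 1 : Fin m → ℕ) i, ?_, ?_⟩
      · rw [Finset.Nat.mem_antidiagonalTuple]
        have hlj : 1 ≤ l j := Nat.one_le_iff_ne_zero.2 hl.2
        have heq : (fun i => l i - (Pi.single j 1 : Fin m → ℕ) i) + Pi.single j 1 = l := by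
          funext i
          by_cases hij : i = j <;> simp [hij, Pi.single_apply] <;> omega
        have := congrArg (fun v : Fin m → ℕ => ∑ i, v i) heq
        simp only [Pi.add_apply, Finset.sum_add_distrib, Finset.sum_pi_single'] at this
        simp only [Finset.mem_univ, if_true] at this
        omega
      · funext i
        by_cases hij : i = j <;> simp [hij, Pi.single_apply]
        omega
    · intro k hk
      rw [Finset.Nat.mem_antidiagonalTuple] at hk
      have hkj : (k + Pi.single j 1 : Fin m → ℕ) j = k j + 1 := by simp
      have hprod : (∏ i, (((k + Pi.single j 1 : Fin m → ℕ) i).factorial : ℂ))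
          = ((k j : ℂ)+1) * ∏ i, ((k i).factorial : ℂ) := by
        have hpt : ∀ i, (((k + Pi.single j 1 : Fin m → ℕ) i).factorial : ℂ)
            = (if i = j then ((k j : ℂ)+1) else 1) * ((k i).factorial : ℂ) := by
          intro i
          by_cases hij : i = j
          · subst hij
            simp [Nat.factorial_succ]
            try push_cast
            try ring
          · simp [hij, Pi.single_apply]
        rw [Finset.prod_congr rfl (fun i _ => hpt i), Finset.prod_mul_distrib]
        simp
      beta_reduce
      rw [hkj, hprod]
      have h1 : (∏ i, ((k i).factorial : ℂ)) ≠ 0 :=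
        Finset.prod_ne_zero_iff.2 fun i _ => Nat.cast_ne_zero.2 (Nat.factorial_ne_zero _)
      have h2 : ((k j : ℂ)+1) ≠ 0 := Nat.cast_add_one_ne_zero _
      rw [div_mul_eq_mul_div, div_mul_eq_mul_div, div_mul_eq_mul_div]
      field_simp
      push_cast [Nat.factorial_succ]
      ring
  rw [Finset.sum_congr rfl fun j _ => key j, Finset.sum_comm]
  refine Finset.sum_congr rfl fun l hl => ?_
  rw [← Finset.sum_mul]
  have hs : ∑ j : Fin m, ((l j : ℂ)/((q:ℂ)+1)) = 1 := by
    rw [← Finset.sum_div, ← Nat.cast_sum, Finset.Nat.mem_antidiagonalTuple.mp hl]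
    push_cast
    rw [div_self hq1]
  rw [hs, one_mul]

lemma aux_leibniz (q : ℕ) : ∀ {m : ℕ} (f : Fin m → ℝ → ℂ) (x : ℝ),
    (∀ i, ContDiffAt ℝ (q:ℕ∞) (f i) x) →
    iteratedDeriv q (fun y => ∏ i, f i y) x
      = ∑ k ∈ Finset.Nat.antidiagonalTuple m q,
          ((q.factorial : ℂ) / ∏ i, ((k i).factorial : ℂ)) *
            ∏ i, iteratedDeriv (k i) (f i) x := by
  induction q with
  | zero =>
    intro m f x _
    simp [Finset.Nat.antidiagonalTuple_zero_right]
  | succ q ih =>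
    intro m f x hf
    -- eventual formula for the derivative of the product
    have hev : (deriv fun y => ∏ i, f i y)
        =ᶠ[𝓝 x] fun y => ∑ j, ∏ i, (fun i => if i = j then deriv (f j) else f i) i y := by
      have hall : ∀ᶠ y in 𝓝 x, ∀ i, ContDiffAt ℝ ((q:ℕ∞)+1) (f i) y := by
        rw [Filter.eventually_all]
        intro i
        exact ((by exact_mod_cast hf i : ContDiffAt ℝ ((q:ℕ∞)+1) (f i) x).eventually (by simp))
      filter_upwards [hall] with y hy
      have hdiff : ∀ i ∈ (univ : Finset (Fin m)), DifferentiableAt ℝ (f i) y := fun i _ =>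
        (hy i).differentiableAt (by simp)
      have := deriv_finset_prod (u := univ) (f := f) hdiff
      rw [show (deriv fun y => ∏ i, f i y) y = deriv (∏ i ∈ univ, f i) y from by congr 1; ext z; simp [Finset.prod_apply], this]
      refine Finset.sum_congr rfl fun j _ => ?_
      rw [← Finset.mul_prod_erase univ (fun i => (if i = j then deriv (f j) else f i) y)
        (mem_univ j)]
      simp only [if_pos rfl, smul_eq_mul]
      rw [mul_comm]
      congr 1
      refine Finset.prod_congr rfl fun i hi => ?_
      rw [if_neg (Finset.mem_erase.mp hi).1]
    rw [iteratedDeriv_succ', hev.iteratedDeriv_eq q]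
    have hg : ∀ (j : Fin m) (i : Fin m),
        ContDiffAt ℝ (q:ℕ∞) ((fun i => if i = j then deriv (f j) else f i) i) x := by
      intro j i
      by_cases hij : i = j
      · simp only [hij, if_pos rfl]
        exact aux_contDiffAt_deriv (by exact_mod_cast hf j)
      · simp only [if_neg hij]
        exact (hf i).of_le (by exact_mod_cast Nat.le_succ q)
    rw [aux_iteratedDeriv_sum univ _ (fun j _ => aux_contDiffAt_prod univ _ (fun i _ => hg j i))]
    have hterm : ∀ j : Fin m,
        iteratedDeriv q (fun y => ∏ i, (fun i => if i = j then deriv (f j) else f i) i y) x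
        = ∑ k ∈ Finset.Nat.antidiagonalTuple m q,
            ((q.factorial : ℂ) / ∏ i, ((k i).factorial : ℂ)) *
              ∏ i, iteratedDeriv (((k + Pi.single j 1 : Fin m → ℕ)) i) (f i) x := by
      intro j
      rw [ih _ x (hg j)]
      refine Finset.sum_congr rfl fun k _ => ?_
      congr 1
      refine Finset.prod_congr rfl fun i _ => ?_
      by_cases hij : i = j
      · subst hij
        beta_reduce
        simp only [if_pos rfl, if_true, eq_self_iff_true, Pi.add_apply, Pi.single_eq_same]
        rw [← iteratedDeriv_succ']
      · simp [hij, Pi.single_apply]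
    rw [Finset.sum_congr rfl fun j _ => hterm j]
    exact aux_comb m q fun l => ∏ i, iteratedDeriv (l i) (f i) x

theorem stmt_8 (m q : ℕ) (Ψ : ℝ → Matrix (Fin m) (Fin m) ℂ)
    (hΨ : ∀ i j, ContDiffAt ℝ (q : ℕ∞) (fun x => Ψ x i j) 0) :
    iteratedDeriv q (fun x => (Ψ x).det) 0 =
      ∑ k ∈ Finset.Nat.antidiagonalTuple m q,
        (Nat.factorial q : ℂ) / (∏ i, (Nat.factorial (k i) : ℂ)) *
          Matrix.det (Matrix.of fun i j =>
            iteratedDeriv (k i) (fun x => Ψ x i j) 0) := by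
  have hdet : ∀ M : Matrix (Fin m) (Fin m) ℂ,
      M.det = ∑ σ : Equiv.Perm (Fin m), ((Equiv.Perm.sign σ : ℤ) : ℂ) * ∏ i, M i (σ i) := by
    intro M
    rw [← Matrix.det_transpose, Matrix.det_apply']
    rfl
  have h1 : (fun x => (Ψ x).det)
      = fun x => ∑ σ : Equiv.Perm (Fin m), ((Equiv.Perm.sign σ : ℤ) : ℂ) * ∏ i, Ψ x i (σ i) :=
    funext fun x => hdet (Ψ x)
  rw [h1]
  rw [aux_iteratedDeriv_sum univ _ (fun σ _ =>
    ContDiffAt.mul contDiffAt_const (aux_contDiffAt_prod univ _ (fun i _ => hΨ i (σ i))))]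
  have h2 : ∀ σ : Equiv.Perm (Fin m),
      iteratedDeriv q (fun y => ((Equiv.Perm.sign σ : ℤ) : ℂ) * ∏ i, Ψ y i (σ i)) 0
      = ((Equiv.Perm.sign σ : ℤ) : ℂ) *
          ∑ k ∈ Finset.Nat.antidiagonalTuple m q,
            ((q.factorial : ℂ) / ∏ i, ((k i).factorial : ℂ)) *
              ∏ i, iteratedDeriv (k i) (fun y => Ψ y i (σ i)) 0 := by
    intro σ
    rw [aux_iteratedDeriv_const_mul _ (aux_contDiffAt_prod univ _ (fun i _ => hΨ i (σ i))),
      aux_leibniz q (fun i y => Ψ y i (σ i)) 0 (fun i => hΨ i (σ i))]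
  rw [Finset.sum_congr rfl fun σ _ => h2 σ]
  simp_rw [Finset.mul_sum]
  rw [Finset.sum_comm]
  refine Finset.sum_congr rfl fun k _ => ?_
  rw [hdet, Finset.mul_sum]
  refine Finset.sum_congr rfl fun σ _ => ?_
  simp only [Matrix.of_apply]
  ring
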